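/- Let F : [0,1]² → ℝ be continuous and let μ* be a doubly stochastic measure on [0,1]² that maximizes ∫ F dμ over all doubly stochastic measures μ on [0,1]². Let C(x,y) = μ*([0,x]×[0,y]) be the associated copula. Suppose [X₁,X₂]×[Y₁,Y₂] ⊆ [0,1]² is a rectangle with C(X₂,Y₂) + C(X₁,Y₁) − C(X₁,Y₂) − C(X₂,Y₁) > 0, and suppose that at every point (x,y) of the open rectangle (X₁,X₂)×(Y₁,Y₂) the mixed second partial derivative ∂²F/∂x∂y exists and is strictly negative. Then for every (x,y) ∈ [X₁,X₂]×[Y₁,Y₂] one has C(x,y) = max( C(x,Y₂) + C(X₂,y) − C(X₂,Y₂), C(x,Y₁) + C(X₁,y) − C(X₁,Y₁) ). -/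

import Mathlib

open MeasureTheory Set

/-- A doubly stochastic measure on `[0,1]²`: a Borel probability measure whose
marginals on both coordinates are Lebesgue measure on `[0,1]`. -/
def IsDoublyStochastic (μ : Measure (ℝ × ℝ)) : Prop :=
  IsProbabilityMeasure μ ∧
  (∀ B : Set ℝ, MeasurableSet B → B ⊆ Icc 0 1 → μ (B ×ˢ Icc (0:ℝ) 1) = volume B) ∧
  (∀ B : Set ℝ, MeasurableSet B → B ⊆ Icc 0 1 → μ (Icc (0:ℝ) 1 ×ˢ B) = volume B)

/-- The copula (distribution function) of a measure on `[0,1]²`. -/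
noncomputable def copulaOf (μ : Measure (ℝ × ℝ)) (x y : ℝ) : ℝ :=
  (μ (Icc 0 x ×ˢ Icc 0 y)).toReal

open Filter
open scoped ENNReal

lemma aux_integ {γ : Type*} [MeasurableSpace γ] [TopologicalSpace γ]
    [OpensMeasurableSpace γ] [SecondCountableTopology γ]
    (ξ : Measure γ) [IsFiniteMeasure ξ] {K : Set γ} (hK : IsCompact K)
    (hKm : MeasurableSet K) (hξ : ξ Kᶜ = 0) {f : γ → ℝ}
    (hf : ContinuousOn f K) : Integrable f ξ := by
  have hae : ∀ᵐ x ∂ξ, x ∈ K := by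
    rw [MeasureTheory.ae_iff]; exact hξ
  have hres : ξ.restrict K = ξ := Measure.restrict_eq_self_of_ae_mem hae
  obtain ⟨M, hM⟩ := hK.exists_bound_of_continuousOn hf
  have hsm : AEStronglyMeasurable f ξ := by
    rw [← hres]; exact hf.aestronglyMeasurable hKm
  refine Integrable.mono' (integrable_const M) hsm ?_
  filter_upwards [hae] with x hx using hM x hx

lemma ds_compl_S (μ : Measure (ℝ × ℝ)) (hds : IsDoublyStochastic μ) :
    μ (Icc (0:ℝ) 1 ×ˢ Icc (0:ℝ) 1)ᶜ = 0 := by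
  haveI := hds.1
  have hS : μ (Icc (0:ℝ) 1 ×ˢ Icc (0:ℝ) 1) = 1 := by
    rw [hds.2.1 (Icc 0 1) measurableSet_Icc subset_rfl, Real.volume_Icc]
    norm_num
  rw [measure_compl (measurableSet_Icc.prod measurableSet_Icc) (measure_ne_top μ _), hS]
  simp

lemma prod_compl_null {X Y : Type*} [MeasurableSpace X] [MeasurableSpace Y]
    (ξ : Measure X) (ρ : Measure Y) [SFinite ρ] {U : Set X} {V : Set Y}
    (hU : ξ Uᶜ = 0) (hV : ρ Vᶜ = 0) : (ξ.prod ρ) (U ×ˢ V)ᶜ = 0 := by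
  have hsub : (U ×ˢ V)ᶜ ⊆ (Uᶜ ×ˢ univ) ∪ (univ ×ˢ Vᶜ) := by
    intro p hp
    simp only [mem_compl_iff, mem_prod, not_and_or] at hp
    simp only [mem_union, mem_prod, mem_univ, and_true, true_and, mem_compl_iff]
    tauto
  refine measure_mono_null hsub (measure_union_null ?_ ?_) <;>
    rw [Measure.prod_prod] <;> simp [hU, hV]

lemma swap_lemma (F : ℝ × ℝ → ℝ)
    (hFcont : ContinuousOn F (Icc (0:ℝ) 1 ×ˢ Icc (0:ℝ) 1))
    (μ : Measure (ℝ × ℝ)) (hds : IsDoublyStochastic μ)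
    {A B : Set (ℝ × ℝ)} (hAm : MeasurableSet A) (hBm : MeasurableSet B)
    (hAS : A ⊆ Icc (0:ℝ) 1 ×ˢ Icc (0:ℝ) 1) (hBS : B ⊆ Icc (0:ℝ) 1 ×ˢ Icc (0:ℝ) 1)
    (hdisj : Disjoint A B) (hA : 0 < μ A) (hB : 0 < μ B)
    {c : ℝ} (hc : 0 < c)
    (hG : ∀ p ∈ A, ∀ q ∈ B, c ≤ F (p.1, q.2) + F (q.1, p.2) - F p - F q) :
    ∃ μ' : Measure (ℝ × ℝ), IsDoublyStochastic μ' ∧ ∫ p, F p ∂μ < ∫ p, F p ∂μ' := by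
  haveI : IsProbabilityMeasure μ := hds.1
  set S : Set (ℝ × ℝ) := Icc (0:ℝ) 1 ×ˢ Icc (0:ℝ) 1 with hSdef
  have hSm : MeasurableSet S := measurableSet_Icc.prod measurableSet_Icc
  have hScomp : IsCompact S := isCompact_Icc.prod isCompact_Icc
  have hμS : μ Sᶜ = 0 := ds_compl_S μ hds
  set a := μ A with hadef
  set b := μ B with hbdef
  have ha0 : a ≠ 0 := hA.ne'
  have hb0 : b ≠ 0 := hB.ne'
  have haT : a ≠ ⊤ := measure_ne_top μ A
  have hbT : b ≠ ⊤ := measure_ne_top μ B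
  set α := min a b with hαdef
  have hα0 : α ≠ 0 := by
    simp only [hαdef, ne_eq, min_eq_iff]
    rintro (⟨h, -⟩ | ⟨h, -⟩) <;> [exact ha0 h; exact hb0 h]
  have hαT : α ≠ ⊤ := ne_top_of_le_ne_top haT (min_le_left _ _)
  have hαa : α ≤ a := min_le_left _ _
  have hαb : α ≤ b := min_le_right _ _
  set c₁ : ℝ≥0∞ := α / a with hc₁def
  set c₂ : ℝ≥0∞ := α / b with hc₂def
  have hc₁le : c₁ ≤ 1 := by
    rw [hc₁def, ENNReal.div_le_iff ha0 haT, one_mul]; exact hαa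
  have hc₂le : c₂ ≤ 1 := by
    rw [hc₂def, ENNReal.div_le_iff hb0 hbT, one_mul]; exact hαb
  set ν₁ := c₁ • μ.restrict A with hν₁def
  set ν₂ := c₂ • μ.restrict B with hν₂def
  have hν₁app : ∀ E : Set (ℝ × ℝ), MeasurableSet E → ν₁ E = c₁ * μ (E ∩ A) := by
    intro E hE
    rw [hν₁def, Measure.smul_apply, Measure.restrict_apply hE, smul_eq_mul]
  have hν₂app : ∀ E : Set (ℝ × ℝ), MeasurableSet E → ν₂ E = c₂ * μ (E ∩ B) := by
    intro E hE
    rw [hν₂def, Measure.smul_apply, Measure.restrict_apply hE, smul_eq_mul]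
  have hν₁univ : ν₁ univ = α := by
    rw [hν₁app univ MeasurableSet.univ, univ_inter, ← hadef, hc₁def,
      ENNReal.div_mul_cancel ha0 haT]
  have hν₂univ : ν₂ univ = α := by
    rw [hν₂app univ MeasurableSet.univ, univ_inter, ← hbdef, hc₂def,
      ENNReal.div_mul_cancel hb0 hbT]
  haveI hfinν₁ : IsFiniteMeasure ν₁ := ⟨by rw [hν₁univ]; exact hαT.lt_top⟩
  haveI hfinν₂ : IsFiniteMeasure ν₂ := ⟨by rw [hν₂univ]; exact hαT.lt_top⟩
  -- marginals of ν₁ ν₂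
  set σ₁ := ν₁.map Prod.fst with hσ₁def
  set σ₂ := ν₂.map Prod.fst with hσ₂def
  set τ₁ := ν₁.map Prod.snd with hτ₁def
  set τ₂ := ν₂.map Prod.snd with hτ₂def
  haveI : IsFiniteMeasure σ₁ := by
    constructor
    rw [hσ₁def, Measure.map_apply measurable_fst MeasurableSet.univ]
    simp [hν₁univ, hαT.lt_top]
  haveI : IsFiniteMeasure σ₂ := by
    constructor
    rw [hσ₂def, Measure.map_apply measurable_fst MeasurableSet.univ]
    simp [hν₂univ, hαT.lt_top]
  haveI : IsFiniteMeasure τ₁ := by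
    constructor
    rw [hτ₁def, Measure.map_apply measurable_snd MeasurableSet.univ]
    simp [hν₁univ, hαT.lt_top]
  haveI : IsFiniteMeasure τ₂ := by
    constructor
    rw [hτ₂def, Measure.map_apply measurable_snd MeasurableSet.univ]
    simp [hν₂univ, hαT.lt_top]
  -- set identities for marginal computations
  have hsubA : ∀ E : Set ℝ, Prod.fst ⁻¹' E ∩ A = (E ×ˢ Icc (0:ℝ) 1) ∩ A := by
    intro E; ext p
    simp only [mem_inter_iff, mem_preimage, mem_prod]
    exact ⟨fun ⟨h1, h2⟩ => ⟨⟨h1, (hAS h2).2⟩, h2⟩, fun ⟨⟨h1, _⟩, h2⟩ => ⟨h1, h2⟩⟩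
  have hsubB : ∀ E : Set ℝ, Prod.fst ⁻¹' E ∩ B = (E ×ˢ Icc (0:ℝ) 1) ∩ B := by
    intro E; ext p
    simp only [mem_inter_iff, mem_preimage, mem_prod]
    exact ⟨fun ⟨h1, h2⟩ => ⟨⟨h1, (hBS h2).2⟩, h2⟩, fun ⟨⟨h1, _⟩, h2⟩ => ⟨h1, h2⟩⟩
  have hsubA' : ∀ E : Set ℝ, Prod.snd ⁻¹' E ∩ A = (Icc (0:ℝ) 1 ×ˢ E) ∩ A := by
    intro E; ext p
    simp only [mem_inter_iff, mem_preimage, mem_prod]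
    exact ⟨fun ⟨h1, h2⟩ => ⟨⟨(hAS h2).1, h1⟩, h2⟩, fun ⟨⟨_, h1⟩, h2⟩ => ⟨h1, h2⟩⟩
  have hsubB' : ∀ E : Set ℝ, Prod.snd ⁻¹' E ∩ B = (Icc (0:ℝ) 1 ×ˢ E) ∩ B := by
    intro E; ext p
    simp only [mem_inter_iff, mem_preimage, mem_prod]
    exact ⟨fun ⟨h1, h2⟩ => ⟨⟨(hBS h2).1, h1⟩, h2⟩, fun ⟨⟨_, h1⟩, h2⟩ => ⟨h1, h2⟩⟩
  have hσ₁app : ∀ E : Set ℝ, MeasurableSet E → σ₁ E = ν₁ (E ×ˢ Icc (0:ℝ) 1) := by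
    intro E hE
    rw [hσ₁def, Measure.map_apply measurable_fst hE,
      hν₁app _ (measurable_fst hE), hν₁app _ (hE.prod measurableSet_Icc), hsubA]
  have hσ₂app : ∀ E : Set ℝ, MeasurableSet E → σ₂ E = ν₂ (E ×ˢ Icc (0:ℝ) 1) := by
    intro E hE
    rw [hσ₂def, Measure.map_apply measurable_fst hE,
      hν₂app _ (measurable_fst hE), hν₂app _ (hE.prod measurableSet_Icc), hsubB]
  have hτ₁app : ∀ E : Set ℝ, MeasurableSet E → τ₁ E = ν₁ (Icc (0:ℝ) 1 ×ˢ E) := by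
    intro E hE
    rw [hτ₁def, Measure.map_apply measurable_snd hE,
      hν₁app _ (measurable_snd hE), hν₁app _ (measurableSet_Icc.prod hE), hsubA']
  have hτ₂app : ∀ E : Set ℝ, MeasurableSet E → τ₂ E = ν₂ (Icc (0:ℝ) 1 ×ˢ E) := by
    intro E hE
    rw [hτ₂def, Measure.map_apply measurable_snd hE,
      hν₂app _ (measurable_snd hE), hν₂app _ (measurableSet_Icc.prod hE), hsubB']
  have hν₁S : ν₁ S = α := by
    rw [hν₁app S hSm, inter_eq_self_of_subset_right hAS, ← hadef, hc₁def,
      ENNReal.div_mul_cancel ha0 haT]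
  have hν₂S : ν₂ S = α := by
    rw [hν₂app S hSm, inter_eq_self_of_subset_right hBS, ← hbdef, hc₂def,
      ENNReal.div_mul_cancel hb0 hbT]
  have hν₁Sc : ν₁ Sᶜ = 0 := by
    rw [hν₁app Sᶜ hSm.compl]
    have : Sᶜ ∩ A = ∅ := by
      rw [eq_empty_iff_forall_notMem]
      exact fun p ⟨h1, h2⟩ => h1 (hAS h2)
    rw [this]; simp
  have hν₂Sc : ν₂ Sᶜ = 0 := by
    rw [hν₂app Sᶜ hSm.compl]
    have : Sᶜ ∩ B = ∅ := by
      rw [eq_empty_iff_forall_notMem]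
      exact fun p ⟨h1, h2⟩ => h1 (hBS h2)
    rw [this]; simp
  have hσ₁univ : σ₁ univ = α := by
    rw [hσ₁def, Measure.map_apply measurable_fst MeasurableSet.univ, preimage_univ, hν₁univ]
  have hσ₂univ : σ₂ univ = α := by
    rw [hσ₂def, Measure.map_apply measurable_fst MeasurableSet.univ, preimage_univ, hν₂univ]
  have hτ₁univ : τ₁ univ = α := by
    rw [hτ₁def, Measure.map_apply measurable_snd MeasurableSet.univ, preimage_univ, hν₁univ]
  have hτ₂univ : τ₂ univ = α := by
    rw [hτ₂def, Measure.map_apply measurable_snd MeasurableSet.univ, preimage_univ, hν₂univ]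
  have hIc : ∀ (ρ : Measure ℝ), ρ univ = α → ρ (Icc (0:ℝ) 1) = α → ρ (Icc (0:ℝ) 1)ᶜ = 0 := by
    intro ρ h1 h2
    have := measure_add_measure_compl (μ := ρ) (measurableSet_Icc (a := (0:ℝ)) (b := 1))
    rw [h1, h2] at this
    exact (ENNReal.add_right_inj hαT).mp (by rw [this, add_zero])
  have hσ₁I : σ₁ (Icc (0:ℝ) 1) = α := by
    rw [hσ₁app _ measurableSet_Icc]; exact hν₁S
  have hσ₂I : σ₂ (Icc (0:ℝ) 1) = α := by
    rw [hσ₂app _ measurableSet_Icc]; exact hν₂S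
  have hτ₁I : τ₁ (Icc (0:ℝ) 1) = α := by
    rw [hτ₁app _ measurableSet_Icc]; exact hν₁S
  have hτ₂I : τ₂ (Icc (0:ℝ) 1) = α := by
    rw [hτ₂app _ measurableSet_Icc]; exact hν₂S
  have hσ₁Ic : σ₁ (Icc (0:ℝ) 1)ᶜ = 0 := hIc σ₁ hσ₁univ hσ₁I
  have hσ₂Ic : σ₂ (Icc (0:ℝ) 1)ᶜ = 0 := hIc σ₂ hσ₂univ hσ₂I
  have hτ₁Ic : τ₁ (Icc (0:ℝ) 1)ᶜ = 0 := hIc τ₁ hτ₁univ hτ₁I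
  have hτ₂Ic : τ₂ (Icc (0:ℝ) 1)ᶜ = 0 := hIc τ₂ hτ₂univ hτ₂I
  -- product measures
  set P₃ := σ₁.prod τ₂ with hP₃def
  set P₄ := σ₂.prod τ₁ with hP₄def
  set ν₃ := α⁻¹ • P₃ with hν₃def
  set ν₄ := α⁻¹ • P₄ with hν₄def
  have hP₃Sc : P₃ Sᶜ = 0 := prod_compl_null σ₁ τ₂ hσ₁Ic hτ₂Ic
  have hP₄Sc : P₄ Sᶜ = 0 := prod_compl_null σ₂ τ₁ hσ₂Ic hτ₁Ic
  have hν₃Sc : ν₃ Sᶜ = 0 := by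
    rw [hν₃def, Measure.smul_apply, hP₃Sc]; simp
  have hν₄Sc : ν₄ Sᶜ = 0 := by
    rw [hν₄def, Measure.smul_apply, hP₄Sc]; simp
  have hcancel : ∀ x : ℝ≥0∞, α⁻¹ * (x * α) = x := by
    intro x
    rw [mul_comm x α, ← mul_assoc, ENNReal.inv_mul_cancel hα0 hαT, one_mul]
  have hcancel' : ∀ x : ℝ≥0∞, α⁻¹ * (α * x) = x := by
    intro x
    rw [← mul_assoc, ENNReal.inv_mul_cancel hα0 hαT, one_mul]
  have hν₃univ : ν₃ univ = α := by
    rw [hν₃def, Measure.smul_apply, hP₃def, ← univ_prod_univ, Measure.prod_prod,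
      hσ₁univ, hτ₂univ, smul_eq_mul, hcancel]
  have hν₄univ : ν₄ univ = α := by
    rw [hν₄def, Measure.smul_apply, hP₄def, ← univ_prod_univ, Measure.prod_prod,
      hσ₂univ, hτ₁univ, smul_eq_mul, hcancel]
  -- cylinder computations
  have hν₃cylE : ∀ E : Set ℝ, MeasurableSet E →
      ν₃ (E ×ˢ Icc (0:ℝ) 1) = ν₁ (E ×ˢ Icc (0:ℝ) 1) := by
    intro E hE
    rw [hν₃def, Measure.smul_apply, hP₃def, Measure.prod_prod, hτ₂I, smul_eq_mul,
      hcancel, hσ₁app E hE]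
  have hν₄cylE : ∀ E : Set ℝ, MeasurableSet E →
      ν₄ (E ×ˢ Icc (0:ℝ) 1) = ν₂ (E ×ˢ Icc (0:ℝ) 1) := by
    intro E hE
    rw [hν₄def, Measure.smul_apply, hP₄def, Measure.prod_prod, hτ₁I, smul_eq_mul,
      hcancel, hσ₂app E hE]
  have hν₃cylI : ∀ E : Set ℝ, MeasurableSet E →
      ν₃ (Icc (0:ℝ) 1 ×ˢ E) = ν₂ (Icc (0:ℝ) 1 ×ˢ E) := by
    intro E hE
    rw [hν₃def, Measure.smul_apply, hP₃def, Measure.prod_prod, hσ₁I, smul_eq_mul,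
      hcancel', hτ₂app E hE]
  have hν₄cylI : ∀ E : Set ℝ, MeasurableSet E →
      ν₄ (Icc (0:ℝ) 1 ×ˢ E) = ν₁ (Icc (0:ℝ) 1 ×ˢ E) := by
    intro E hE
    rw [hν₄def, Measure.smul_apply, hP₄def, Measure.prod_prod, hσ₂I, smul_eq_mul,
      hcancel', hτ₁app E hE]
  -- the modified measure
  set μ' : Measure (ℝ × ℝ) := μ.restrict (A ∪ B)ᶜ +
      ((1 - c₁) • μ.restrict A + ((1 - c₂) • μ.restrict B + (ν₃ + ν₄))) with hμ'def
  -- decomposition of μ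
  have hsplitA : c₁ • μ.restrict A + (1 - c₁) • μ.restrict A = μ.restrict A := by
    rw [← add_smul, add_tsub_cancel_of_le hc₁le, one_smul]
  have hsplitB : c₂ • μ.restrict B + (1 - c₂) • μ.restrict B = μ.restrict B := by
    rw [← add_smul, add_tsub_cancel_of_le hc₂le, one_smul]
  -- applied versions
  have happμ : ∀ E : Set (ℝ × ℝ), μ E =
      (μ.restrict (A ∪ B)ᶜ) E + ((1 - c₁) • μ.restrict A) E + ((1 - c₂) • μ.restrict B) E
        + (ν₁ E + ν₂ E) := by
    intro E
    have h1 : ν₁ E + ((1 - c₁) • μ.restrict A) E = μ.restrict A E := by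
      rw [hν₁def, ← Measure.add_apply, hsplitA]
    have h2 : ν₂ E + ((1 - c₂) • μ.restrict B) E = μ.restrict B E := by
      rw [hν₂def, ← Measure.add_apply, hsplitB]
    have h3 : (μ.restrict (A ∪ B)ᶜ) E + (μ.restrict A E + μ.restrict B E) = μ E := by
      rw [← Measure.add_apply (μ.restrict A) (μ.restrict B),
        ← Measure.restrict_union hdisj hBm, ← Measure.add_apply, add_comm,
        Measure.restrict_add_restrict_compl (hAm.union hBm)]
    rw [← h3, ← h1, ← h2]
    ring
  have happμ' : ∀ E : Set (ℝ × ℝ), μ' E =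
      (μ.restrict (A ∪ B)ᶜ) E + ((1 - c₁) • μ.restrict A) E + ((1 - c₂) • μ.restrict B) E
        + (ν₃ E + ν₄ E) := by
    intro E
    rw [hμ'def]
    simp only [Measure.add_apply]
    ring
  have hkey : ∀ E : Set (ℝ × ℝ), ν₃ E + ν₄ E = ν₁ E + ν₂ E → μ' E = μ E := by
    intro E hE
    rw [happμ E, happμ' E, hE]
  -- μ' is doubly stochastic
  have hμ'univ : μ' univ = 1 := by
    rw [hkey univ (by rw [hν₃univ, hν₄univ, hν₁univ, hν₂univ])]
    exact measure_univ
  have hds' : IsDoublyStochastic μ' := by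
    refine ⟨⟨hμ'univ⟩, ?_, ?_⟩
    · intro E hE hEI
      rw [hkey _ (by rw [hν₃cylE E hE, hν₄cylE E hE])]
      exact hds.2.1 E hE hEI
    · intro E hE hEI
      rw [hkey _ (by rw [hν₃cylI E hE, hν₄cylI E hE, add_comm])]
      exact hds.2.2 E hE hEI
  -- finiteness of the pieces
  haveI hfinA' : IsFiniteMeasure ((1 - c₁) • μ.restrict A) := by
    constructor
    rw [Measure.smul_apply, smul_eq_mul]
    exact ENNReal.mul_lt_top (lt_of_le_of_lt (tsub_le_self) ENNReal.one_lt_top)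
      (measure_lt_top _ _)
  haveI hfinB' : IsFiniteMeasure ((1 - c₂) • μ.restrict B) := by
    constructor
    rw [Measure.smul_apply, smul_eq_mul]
    exact ENNReal.mul_lt_top (lt_of_le_of_lt (tsub_le_self) ENNReal.one_lt_top)
      (measure_lt_top _ _)
  haveI hfinν₃ : IsFiniteMeasure ν₃ := ⟨by rw [hν₃univ]; exact hαT.lt_top⟩
  haveI hfinν₄ : IsFiniteMeasure ν₄ := ⟨by rw [hν₄univ]; exact hαT.lt_top⟩
  -- supports of the pieces
  have h0Sc : (μ.restrict (A ∪ B)ᶜ) Sᶜ = 0 := by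
    rw [Measure.restrict_apply hSm.compl]
    exact measure_mono_null inter_subset_left hμS
  have hrASc : (μ.restrict A) Sᶜ = 0 := by
    rw [Measure.restrict_apply hSm.compl]
    exact measure_mono_null inter_subset_left hμS
  have hrBSc : (μ.restrict B) Sᶜ = 0 := by
    rw [Measure.restrict_apply hSm.compl]
    exact measure_mono_null inter_subset_left hμS
  have hrA'Sc : ((1 - c₁) • μ.restrict A) Sᶜ = 0 := by
    rw [Measure.smul_apply, hrASc]; simp
  have hrB'Sc : ((1 - c₂) • μ.restrict B) Sᶜ = 0 := by
    rw [Measure.smul_apply, hrBSc]; simp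
  -- integrability of F with respect to the pieces
  have intF : ∀ ξ : Measure (ℝ × ℝ), IsFiniteMeasure ξ → ξ Sᶜ = 0 → Integrable F ξ := by
    intro ξ hfin hcs
    haveI := hfin
    exact aux_integ ξ hScomp hSm hcs hFcont
  have int0 : Integrable F (μ.restrict (A ∪ B)ᶜ) := intF _ inferInstance h0Sc
  have intA : Integrable F (μ.restrict A) := intF _ inferInstance hrASc
  have intB : Integrable F (μ.restrict B) := intF _ inferInstance hrBSc
  have intA' : Integrable F ((1 - c₁) • μ.restrict A) := intF _ hfinA' hrA'Sc
  have intB' : Integrable F ((1 - c₂) • μ.restrict B) := intF _ hfinB' hrB'Sc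
  have intν₁ : Integrable F ν₁ := intF _ hfinν₁ hν₁Sc
  have intν₂ : Integrable F ν₂ := intF _ hfinν₂ hν₂Sc
  have intν₃ : Integrable F ν₃ := intF _ hfinν₃ hν₃Sc
  have intν₄ : Integrable F ν₄ := intF _ hfinν₄ hν₄Sc
  have intP₃ : Integrable F P₃ := intF _ inferInstance hP₃Sc
  have intP₄ : Integrable F P₄ := intF _ inferInstance hP₄Sc
  -- integral decompositions
  have hIμ' : ∫ p, F p ∂μ' = ∫ p, F p ∂(μ.restrict (A ∪ B)ᶜ) +
      (∫ p, F p ∂((1 - c₁) • μ.restrict A) + (∫ p, F p ∂((1 - c₂) • μ.restrict B) +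
        (∫ p, F p ∂ν₃ + ∫ p, F p ∂ν₄))) := by
    rw [hμ'def, integral_add_measure int0 (intA'.add_measure (intB'.add_measure
      (intν₃.add_measure intν₄))), integral_add_measure intA' (intB'.add_measure
      (intν₃.add_measure intν₄)), integral_add_measure intB' (intν₃.add_measure intν₄),
      integral_add_measure intν₃ intν₄]
  have hIμ : ∫ p, F p ∂μ = ∫ p, F p ∂(μ.restrict (A ∪ B)ᶜ) +
      ((∫ p, F p ∂ν₁ + ∫ p, F p ∂((1 - c₁) • μ.restrict A)) +
       (∫ p, F p ∂ν₂ + ∫ p, F p ∂((1 - c₂) • μ.restrict B))) := by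
    have e1 : ∫ p, F p ∂(μ.restrict A) =
        ∫ p, F p ∂ν₁ + ∫ p, F p ∂((1 - c₁) • μ.restrict A) := by
      conv_lhs => rw [← hsplitA]
      exact integral_add_measure intν₁ intA'
    have e2 : ∫ p, F p ∂(μ.restrict B) =
        ∫ p, F p ∂ν₂ + ∫ p, F p ∂((1 - c₂) • μ.restrict B) := by
      conv_lhs => rw [← hsplitB]
      exact integral_add_measure intν₂ intB'
    conv_lhs => rw [← Measure.restrict_add_restrict_compl (μ := μ) (hAm.union hBm)]
    rw [integral_add_measure (by
        rw [Measure.restrict_union hdisj hBm]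
        exact intA.add_measure intB) int0,
      Measure.restrict_union hdisj hBm, integral_add_measure intA intB, e1, e2]
    ring
  -- product measure computations
  set PP := ν₁.prod ν₂ with hPPdef
  have hPPSS : PP ((S ×ˢ S)ᶜ) = 0 := prod_compl_null ν₁ ν₂ hν₁Sc hν₂Sc
  have hν₁Ac : ν₁ Aᶜ = 0 := by
    rw [hν₁app Aᶜ hAm.compl, compl_inter_self]; simp
  have hν₂Bc : ν₂ Bᶜ = 0 := by
    rw [hν₂app Bᶜ hBm.compl, compl_inter_self]; simp
  have hPPAB : PP ((A ×ˢ B)ᶜ) = 0 := prod_compl_null ν₁ ν₂ hν₁Ac hν₂Bc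
  have hSScomp : IsCompact (S ×ˢ S) := hScomp.prod hScomp
  have hSSm : MeasurableSet (S ×ˢ S) := hSm.prod hSm
  -- continuity of the four composed functions
  have hmaps₁ : MapsTo (fun z : (ℝ × ℝ) × (ℝ × ℝ) => (z.1.1, z.2.2)) (S ×ˢ S) S :=
    fun z hz => ⟨hz.1.1, hz.2.2⟩
  have hmaps₂ : MapsTo (fun z : (ℝ × ℝ) × (ℝ × ℝ) => (z.2.1, z.1.2)) (S ×ˢ S) S :=
    fun z hz => ⟨hz.2.1, hz.1.2⟩
  have hmaps₃ : MapsTo (fun z : (ℝ × ℝ) × (ℝ × ℝ) => z.1) (S ×ˢ S) S := fun z hz => hz.1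
  have hmaps₄ : MapsTo (fun z : (ℝ × ℝ) × (ℝ × ℝ) => z.2) (S ×ˢ S) S := fun z hz => hz.2
  have hcont₁ : ContinuousOn (fun z : (ℝ × ℝ) × (ℝ × ℝ) => F (z.1.1, z.2.2)) (S ×ˢ S) := by
    have := hFcont.comp (Continuous.continuousOn (by fun_prop) :
      ContinuousOn (fun z : (ℝ × ℝ) × (ℝ × ℝ) => (z.1.1, z.2.2)) (S ×ˢ S)) hmaps₁
    exact this
  have hcont₂ : ContinuousOn (fun z : (ℝ × ℝ) × (ℝ × ℝ) => F (z.2.1, z.1.2)) (S ×ˢ S) := by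
    have := hFcont.comp (Continuous.continuousOn (by fun_prop) :
      ContinuousOn (fun z : (ℝ × ℝ) × (ℝ × ℝ) => (z.2.1, z.1.2)) (S ×ˢ S)) hmaps₂
    exact this
  have hcont₃ : ContinuousOn (fun z : (ℝ × ℝ) × (ℝ × ℝ) => F z.1) (S ×ˢ S) := by
    have := hFcont.comp (Continuous.continuousOn (by fun_prop) :
      ContinuousOn (fun z : (ℝ × ℝ) × (ℝ × ℝ) => z.1) (S ×ˢ S)) hmaps₃
    exact this
  have hcont₄ : ContinuousOn (fun z : (ℝ × ℝ) × (ℝ × ℝ) => F z.2) (S ×ˢ S) := by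
    have := hFcont.comp (Continuous.continuousOn (by fun_prop) :
      ContinuousOn (fun z : (ℝ × ℝ) × (ℝ × ℝ) => z.2) (S ×ˢ S)) hmaps₄
    exact this
  have intf₁ : Integrable (fun z : (ℝ × ℝ) × (ℝ × ℝ) => F (z.1.1, z.2.2)) PP :=
    aux_integ PP hSScomp hSSm hPPSS hcont₁
  have intf₂ : Integrable (fun z : (ℝ × ℝ) × (ℝ × ℝ) => F (z.2.1, z.1.2)) PP :=
    aux_integ PP hSScomp hSSm hPPSS hcont₂
  have intf₃ : Integrable (fun z : (ℝ × ℝ) × (ℝ × ℝ) => F z.1) PP :=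
    aux_integ PP hSScomp hSSm hPPSS hcont₃
  have intf₄ : Integrable (fun z : (ℝ × ℝ) × (ℝ × ℝ) => F z.2) PP :=
    aux_integ PP hSScomp hSSm hPPSS hcont₄
  -- Fubini computations
  have hT3 : ∫ z : (ℝ × ℝ) × (ℝ × ℝ), F z.1 ∂PP = α.toReal * ∫ p, F p ∂ν₁ := by
    rw [hPPdef, integral_prod _ intf₃]
    simp only [integral_const, measureReal_def, hν₂univ, smul_eq_mul, measure_univ]
    rw [← integral_const_mul]
  have hT4 : ∫ z : (ℝ × ℝ) × (ℝ × ℝ), F z.2 ∂PP = α.toReal * ∫ p, F p ∂ν₂ := by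
    rw [hPPdef, integral_prod _ intf₄]
    simp only [integral_const, measureReal_def, hν₁univ, smul_eq_mul]
  have hmapP₃ : P₃ = Measure.map (Prod.map (Prod.fst : ℝ × ℝ → ℝ) Prod.snd) PP := by
    rw [hP₃def, hσ₁def, hτ₂def, hPPdef, Measure.map_prod_map _ _ measurable_fst measurable_snd]
  have hT1 : ∫ p, F p ∂P₃ = ∫ z : (ℝ × ℝ) × (ℝ × ℝ), F (z.1.1, z.2.2) ∂PP := by
    have hsm : AEStronglyMeasurable F
        (Measure.map (Prod.map (Prod.fst : ℝ × ℝ → ℝ) Prod.snd) PP) :=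
      hmapP₃ ▸ intP₃.aestronglyMeasurable
    rw [hmapP₃, integral_map (measurable_fst.prodMap measurable_snd).aemeasurable hsm]
    simp [Prod.map]
  have hmapP₄ : P₄ = Measure.map ((Prod.map (Prod.fst : ℝ × ℝ → ℝ) Prod.snd) ∘ Prod.swap) PP := by
    rw [hP₄def, hσ₂def, hτ₁def, Measure.map_prod_map _ _ measurable_fst measurable_snd,
      ← Measure.map_map (measurable_fst.prodMap measurable_snd) measurable_swap,
      hPPdef, Measure.prod_swap]
  have hT2 : ∫ p, F p ∂P₄ = ∫ z : (ℝ × ℝ) × (ℝ × ℝ), F (z.2.1, z.1.2) ∂PP := by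
    have hsm : AEStronglyMeasurable F
        (Measure.map ((Prod.map (Prod.fst : ℝ × ℝ → ℝ) Prod.snd) ∘ Prod.swap) PP) :=
      hmapP₄ ▸ intP₄.aestronglyMeasurable
    rw [hmapP₄, integral_map ((measurable_fst.prodMap measurable_snd).comp
      measurable_swap).aemeasurable hsm]
    simp [Prod.map, Prod.swap]
  -- lower bound for the combined integrand
  have haeAB : ∀ᵐ z ∂PP, z ∈ A ×ˢ B := mem_ae_iff.mpr hPPAB
  have hGae : ∀ᵐ z ∂PP, c ≤ F (z.1.1, z.2.2) + F (z.2.1, z.1.2) - F z.1 - F z.2 := by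
    filter_upwards [haeAB] with z hz
    exact hG z.1 hz.1 z.2 hz.2
  have hPPuniv : PP univ = α * α := by
    rw [hPPdef, ← univ_prod_univ, Measure.prod_prod, hν₁univ, hν₂univ]
  have i12 : Integrable (fun z : (ℝ × ℝ) × (ℝ × ℝ) =>
      F (z.1.1, z.2.2) + F (z.2.1, z.1.2)) PP := intf₁.add intf₂
  have i123 : Integrable (fun z : (ℝ × ℝ) × (ℝ × ℝ) =>
      F (z.1.1, z.2.2) + F (z.2.1, z.1.2) - F z.1) PP := i12.sub intf₃
  have intG : Integrable (fun z : (ℝ × ℝ) × (ℝ × ℝ) =>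
      F (z.1.1, z.2.2) + F (z.2.1, z.1.2) - F z.1 - F z.2) PP := i123.sub intf₄
  have hlow : c * (α.toReal * α.toReal) ≤
      ∫ z : (ℝ × ℝ) × (ℝ × ℝ), (F (z.1.1, z.2.2) + F (z.2.1, z.1.2) - F z.1 - F z.2) ∂PP := by
    have := integral_mono_ae (integrable_const c) intG hGae
    rw [integral_const, measureReal_def, hPPuniv, smul_eq_mul, ENNReal.toReal_mul] at this
    linarith [this]
  have hGsplit : ∫ z : (ℝ × ℝ) × (ℝ × ℝ),
      (F (z.1.1, z.2.2) + F (z.2.1, z.1.2) - F z.1 - F z.2) ∂PP =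
      (∫ z : (ℝ × ℝ) × (ℝ × ℝ), F (z.1.1, z.2.2) ∂PP) +
      (∫ z : (ℝ × ℝ) × (ℝ × ℝ), F (z.2.1, z.1.2) ∂PP) -
      (∫ z : (ℝ × ℝ) × (ℝ × ℝ), F z.1 ∂PP) -
      (∫ z : (ℝ × ℝ) × (ℝ × ℝ), F z.2 ∂PP) := by
    rw [integral_sub i123 intf₄, integral_sub i12 intf₃, integral_add intf₁ intf₂]
  -- putting it together
  set t := α.toReal with htdef
  have ht0 : 0 < t := ENNReal.toReal_pos hα0 hαT
  have hIν₃ : ∫ p, F p ∂ν₃ = t⁻¹ * ∫ p, F p ∂P₃ := by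
    rw [hν₃def, integral_smul_measure, ENNReal.toReal_inv, smul_eq_mul]
  have hIν₄ : ∫ p, F p ∂ν₄ = t⁻¹ * ∫ p, F p ∂P₄ := by
    rw [hν₄def, integral_smul_measure, ENNReal.toReal_inv, smul_eq_mul]
  have hdiff : ∫ p, F p ∂ν₃ + ∫ p, F p ∂ν₄ - ∫ p, F p ∂ν₁ - ∫ p, F p ∂ν₂ ≥ c * t := by
    have e1 : ∫ p, F p ∂ν₁ = t⁻¹ * (∫ z : (ℝ × ℝ) × (ℝ × ℝ), F z.1 ∂PP) := by
      rw [hT3]; field_simp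
    have e2 : ∫ p, F p ∂ν₂ = t⁻¹ * (∫ z : (ℝ × ℝ) × (ℝ × ℝ), F z.2 ∂PP) := by
      rw [hT4]; field_simp
    rw [hIν₃, hIν₄, hT1, hT2, e1, e2]
    have hinv : (0:ℝ) < t⁻¹ := by positivity
    have := hlow
    rw [hGsplit] at this
    calc t⁻¹ * (∫ z : (ℝ × ℝ) × (ℝ × ℝ), F (z.1.1, z.2.2) ∂PP) +
          t⁻¹ * (∫ z : (ℝ × ℝ) × (ℝ × ℝ), F (z.2.1, z.1.2) ∂PP) -
          t⁻¹ * (∫ z : (ℝ × ℝ) × (ℝ × ℝ), F z.1 ∂PP) -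
          t⁻¹ * (∫ z : (ℝ × ℝ) × (ℝ × ℝ), F z.2 ∂PP)
        = t⁻¹ * ((∫ z : (ℝ × ℝ) × (ℝ × ℝ), F (z.1.1, z.2.2) ∂PP) +
          (∫ z : (ℝ × ℝ) × (ℝ × ℝ), F (z.2.1, z.1.2) ∂PP) -
          (∫ z : (ℝ × ℝ) × (ℝ × ℝ), F z.1 ∂PP) -
          (∫ z : (ℝ × ℝ) × (ℝ × ℝ), F z.2 ∂PP)) := by ring
      _ ≥ t⁻¹ * (c * (t * t)) := by
          apply mul_le_mul_of_nonneg_left _ hinv.le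
          calc c * (t * t) = c * (t * t) := rfl
            _ ≤ _ := by rw [← mul_assoc] at this ⊢; linarith [this]
      _ = c * t := by field_simp
  have hfinal : ∫ p, F p ∂μ < ∫ p, F p ∂μ' := by
    rw [hIμ, hIμ']
    have := mul_pos hc ht0
    linarith
  exact ⟨μ', hds', hfinal⟩

section Delta
variable (F : ℝ × ℝ → ℝ) (X₁ X₂ Y₁ Y₂ : ℝ)
variable (hFcont : ContinuousOn F (Icc (0:ℝ) 1 ×ˢ Icc (0:ℝ) 1))

/-- strict submodularity in the open rectangle -/
lemma delta_pos_int
    (hD2 : ∀ x y, x ∈ Ioo X₁ X₂ → y ∈ Ioo Y₁ Y₂ →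
      DifferentiableAt ℝ (fun x' => F (x', y)) x ∧
      DifferentiableAt ℝ (fun y' => deriv (fun x' => F (x', y')) x) y ∧
      deriv (fun y' => deriv (fun x' => F (x', y')) x) y < 0) {x₁ x₂ y₁ y₂ : ℝ}
    (h1 : X₁ < x₁) (h12 : x₁ < x₂) (h2 : x₂ < X₂)
    (h3 : Y₁ < y₁) (h34 : y₁ < y₂) (h4 : y₂ < Y₂) :
    0 < F (x₁, y₂) + F (x₂, y₁) - F (x₁, y₁) - F (x₂, y₂) := by
  set ψ : ℝ → ℝ → ℝ := fun x y => deriv (fun x' => F (x', y)) x with hψ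
  -- step 1 : for x in the open interval, ψ x y₂ < ψ x y₁
  have step1 : ∀ x ∈ Ioo X₁ X₂, ψ x y₂ < ψ x y₁ := by
    intro x hx
    have hanti : StrictAntiOn (fun y => ψ x y) (Icc y₁ y₂) := by
      apply strictAntiOn_of_deriv_neg (convex_Icc _ _)
      · intro y hy
        have hy' : y ∈ Ioo Y₁ Y₂ := ⟨lt_of_lt_of_le h3 hy.1, lt_of_le_of_lt hy.2 h4⟩
        exact ((hD2 x y hx hy').2.1).continuousAt.continuousWithinAt
      · intro y hy
        rw [interior_Icc] at hy
        have hy' : y ∈ Ioo Y₁ Y₂ := ⟨h3.trans hy.1, hy.2.trans h4⟩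
        exact (hD2 x y hx hy').2.2
    exact hanti (left_mem_Icc.2 h34.le) (right_mem_Icc.2 h34.le) h34
  -- step 2 : h x := F (x,y₂) - F (x,y₁) is strictly decreasing on [x₁,x₂]
  have hy₁' : y₁ ∈ Ioo Y₁ Y₂ := ⟨h3, h34.trans h4⟩
  have hy₂' : y₂ ∈ Ioo Y₁ Y₂ := ⟨h3.trans h34, h4⟩
  have hanti : StrictAntiOn (fun x => F (x, y₂) - F (x, y₁)) (Icc x₁ x₂) := by
    apply strictAntiOn_of_deriv_neg (convex_Icc _ _)
    · intro x hx
      have hx' : x ∈ Ioo X₁ X₂ := ⟨lt_of_lt_of_le h1 hx.1, lt_of_le_of_lt hx.2 h2⟩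
      exact (((hD2 x y₂ hx' hy₂').1.sub (hD2 x y₁ hx' hy₁').1)).continuousAt.continuousWithinAt
    · intro x hx
      rw [interior_Icc] at hx
      have hx' : x ∈ Ioo X₁ X₂ := ⟨h1.trans hx.1, hx.2.trans h2⟩
      have hd2 := (hD2 x y₂ hx' hy₂').1
      have hd1 := (hD2 x y₁ hx' hy₁').1
      have : deriv (fun x' => F (x', y₂) - F (x', y₁)) x = ψ x y₂ - ψ x y₁ :=
        deriv_sub hd2 hd1
      rw [this]
      have := step1 x hx'
      linarith
  have := hanti (left_mem_Icc.2 h12.le) (right_mem_Icc.2 h12.le) h12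
  dsimp at this
  linarith
end Delta

open Filter

section Delta2
variable (F : ℝ × ℝ → ℝ) (X₁ X₂ Y₁ Y₂ : ℝ)

lemma delta_nonneg_int
    (hD2 : ∀ x y, x ∈ Ioo X₁ X₂ → y ∈ Ioo Y₁ Y₂ →
      DifferentiableAt ℝ (fun x' => F (x', y)) x ∧
      DifferentiableAt ℝ (fun y' => deriv (fun x' => F (x', y')) x) y ∧
      deriv (fun y' => deriv (fun x' => F (x', y')) x) y < 0) {x₁ x₂ y₁ y₂ : ℝ}
    (h1 : X₁ < x₁) (h12 : x₁ ≤ x₂) (h2 : x₂ < X₂)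
    (h3 : Y₁ < y₁) (h34 : y₁ ≤ y₂) (h4 : y₂ < Y₂) :
    0 ≤ F (x₁, y₂) + F (x₂, y₁) - F (x₁, y₁) - F (x₂, y₂) := by
  rcases eq_or_lt_of_le h12 with rfl | h12
  · simp
  rcases eq_or_lt_of_le h34 with rfl | h34
  · simp
  exact (delta_pos_int F X₁ X₂ Y₁ Y₂ hD2 h1 h12 h2 h3 h34 h4).le

lemma delta_nonneg_bd
    (hFcont : ContinuousOn F (Icc (0:ℝ) 1 ×ˢ Icc (0:ℝ) 1))
    (hD2 : ∀ x y, x ∈ Ioo X₁ X₂ → y ∈ Ioo Y₁ Y₂ →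
      DifferentiableAt ℝ (fun x' => F (x', y)) x ∧
      DifferentiableAt ℝ (fun y' => deriv (fun x' => F (x', y')) x) y ∧
      deriv (fun y' => deriv (fun x' => F (x', y')) x) y < 0)
    (hX₁ : 0 ≤ X₁) (hX₂ : X₂ ≤ 1) (hY₁ : 0 ≤ Y₁) (hY₂ : Y₂ ≤ 1)
    {x₁ x₂ y₁ y₂ : ℝ}
    (h1 : X₁ < x₁) (h12 : x₁ ≤ x₂) (h2 : x₂ ≤ X₂)
    (h3 : Y₁ < y₁) (h34 : y₁ ≤ y₂) (h4 : y₂ ≤ Y₂) :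
    0 ≤ F (x₁, y₂) + F (x₂, y₁) - F (x₁, y₁) - F (x₂, y₂) := by
  rcases eq_or_lt_of_le h12 with rfl | h12
  · simp
  rcases eq_or_lt_of_le h34 with rfl | h34
  · simp
  set S : Set (ℝ × ℝ) := Icc (0:ℝ) 1 ×ˢ Icc (0:ℝ) 1 with hS
  set s : ℕ → ℝ := fun n => x₂ - (x₂ - x₁) * (1 / ((n : ℝ) + 1)) with hs
  set t : ℕ → ℝ := fun n => y₂ - (y₂ - y₁) * (1 / ((n : ℝ) + 1)) with ht
  have hspos : ∀ n : ℕ, (0:ℝ) < 1 / ((n : ℝ) + 1) := by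
    intro n; positivity
  have hsle : ∀ n : ℕ, 1 / ((n : ℝ) + 1) ≤ 1 := by
    intro n
    rw [div_le_one (by positivity)]
    simp [Nat.cast_nonneg]
  have hs1 : ∀ n, x₁ ≤ s n := by
    intro n
    have h := hsle n
    have : (x₂ - x₁) * (1 / ((n : ℝ) + 1)) ≤ (x₂ - x₁) * 1 :=
      mul_le_mul_of_nonneg_left h (by linarith)
    simp only [hs]; nlinarith
  have hs2 : ∀ n, s n < x₂ := by
    intro n
    have := hspos n
    simp only [hs]; nlinarith
  have ht1 : ∀ n, y₁ ≤ t n := by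
    intro n
    have h := hsle n
    have : (y₂ - y₁) * (1 / ((n : ℝ) + 1)) ≤ (y₂ - y₁) * 1 :=
      mul_le_mul_of_nonneg_left h (by linarith)
    simp only [ht]; nlinarith
  have ht2 : ∀ n, t n < y₂ := by
    intro n
    have := hspos n
    simp only [ht]; nlinarith
  have hnn : ∀ n : ℕ, 0 ≤ F (x₁, t n) + F (s n, y₁) - F (x₁, y₁) - F (s n, t n) := by
    intro n
    exact delta_nonneg_int F X₁ X₂ Y₁ Y₂ hD2 h1 (hs1 n) (lt_of_lt_of_le (hs2 n) h2)
      h3 (ht1 n) (lt_of_lt_of_le (ht2 n) h4)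
  -- limits
  have h0 : Tendsto (fun n : ℕ => 1 / ((n : ℝ) + 1)) atTop (nhds 0) :=
    tendsto_one_div_add_atTop_nhds_zero_nat
  have hst : Tendsto s atTop (nhds x₂) := by
    have := (tendsto_const_nhds (x := x₂) (f := atTop (α := ℕ))).sub
      ((tendsto_const_nhds (x := x₂ - x₁) (f := atTop (α := ℕ))).mul h0)
    simpa [hs, one_div] using this
  have htt : Tendsto t atTop (nhds y₂) := by
    have := (tendsto_const_nhds (x := y₂) (f := atTop (α := ℕ))).sub
      ((tendsto_const_nhds (x := y₂ - y₁) (f := atTop (α := ℕ))).mul h0)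
    simpa [ht, one_div] using this
  -- memberships
  have hx₁I : x₁ ∈ Icc (0:ℝ) 1 := ⟨le_of_lt (lt_of_le_of_lt hX₁ h1), le_trans (le_trans h12.le h2) hX₂⟩
  have hx₂I : x₂ ∈ Icc (0:ℝ) 1 := ⟨le_trans hx₁I.1 h12.le, le_trans h2 hX₂⟩
  have hy₁I : y₁ ∈ Icc (0:ℝ) 1 := ⟨le_of_lt (lt_of_le_of_lt hY₁ h3), le_trans (le_trans h34.le h4) hY₂⟩
  have hy₂I : y₂ ∈ Icc (0:ℝ) 1 := ⟨le_trans hy₁I.1 h34.le, le_trans h4 hY₂⟩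
  have hsI : ∀ n, s n ∈ Icc (0:ℝ) 1 := fun n => ⟨le_trans hx₁I.1 (hs1 n), le_trans (hs2 n).le hx₂I.2⟩
  have htI : ∀ n, t n ∈ Icc (0:ℝ) 1 := fun n => ⟨le_trans hy₁I.1 (ht1 n), le_trans (ht2 n).le hy₂I.2⟩
  have key : ∀ (u : ℕ → ℝ × ℝ) (z : ℝ × ℝ), z ∈ S → (∀ n, u n ∈ S) →
      Tendsto u atTop (nhds z) → Tendsto (fun n => F (u n)) atTop (nhds (F z)) := by
    intro u z hz hu htu
    have h1 : Tendsto u atTop (nhdsWithin z S) :=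
      tendsto_nhdsWithin_of_tendsto_nhds_of_eventually_within u htu
        (Eventually.of_forall hu)
    exact ((hFcont z hz).tendsto).comp h1
  have T1 : Tendsto (fun n => F (x₁, t n)) atTop (nhds (F (x₁, y₂))) :=
    key _ _ (by exact ⟨hx₁I, hy₂I⟩) (fun n => ⟨hx₁I, htI n⟩)
      ((tendsto_const_nhds).prodMk_nhds htt)
  have T2 : Tendsto (fun n => F (s n, y₁)) atTop (nhds (F (x₂, y₁))) :=
    key _ _ (by exact ⟨hx₂I, hy₁I⟩) (fun n => ⟨hsI n, hy₁I⟩)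
      (hst.prodMk_nhds tendsto_const_nhds)
  have T3 : Tendsto (fun n => F (s n, t n)) atTop (nhds (F (x₂, y₂))) :=
    key _ _ (by exact ⟨hx₂I, hy₂I⟩) (fun n => ⟨hsI n, htI n⟩)
      (hst.prodMk_nhds htt)
  have Tall : Tendsto (fun n => F (x₁, t n) + F (s n, y₁) - F (x₁, y₁) - F (s n, t n))
      atTop (nhds (F (x₁, y₂) + F (x₂, y₁) - F (x₁, y₁) - F (x₂, y₂))) :=
    ((T1.add T2).sub tendsto_const_nhds).sub T3
  exact ge_of_tendsto' Tall hnn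

lemma delta_pos_bd
    (hFcont : ContinuousOn F (Icc (0:ℝ) 1 ×ˢ Icc (0:ℝ) 1))
    (hD2 : ∀ x y, x ∈ Ioo X₁ X₂ → y ∈ Ioo Y₁ Y₂ →
      DifferentiableAt ℝ (fun x' => F (x', y)) x ∧
      DifferentiableAt ℝ (fun y' => deriv (fun x' => F (x', y')) x) y ∧
      deriv (fun y' => deriv (fun x' => F (x', y')) x) y < 0)
    (hX₁ : 0 ≤ X₁) (hX₂ : X₂ ≤ 1) (hY₁ : 0 ≤ Y₁) (hY₂ : Y₂ ≤ 1)
    {x₁ x₂ y₁ y₂ : ℝ}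
    (h1 : X₁ < x₁) (h12 : x₁ < x₂) (h2 : x₂ ≤ X₂)
    (h3 : Y₁ < y₁) (h34 : y₁ < y₂) (h4 : y₂ ≤ Y₂) :
    0 < F (x₁, y₂) + F (x₂, y₁) - F (x₁, y₁) - F (x₂, y₂) := by
  set xm := (x₁ + x₂) / 2 with hxm
  set ym := (y₁ + y₂) / 2 with hym
  have hxm1 : x₁ < xm := by simp only [hxm]; linarith
  have hxm2 : xm < x₂ := by simp only [hxm]; linarith
  have hym1 : y₁ < ym := by simp only [hym]; linarith
  have hym2 : ym < y₂ := by simp only [hym]; linarith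
  have A : 0 < F (x₁, ym) + F (xm, y₁) - F (x₁, y₁) - F (xm, ym) :=
    delta_pos_int F X₁ X₂ Y₁ Y₂ hD2 h1 hxm1 (lt_of_lt_of_le hxm2 h2)
      h3 hym1 (lt_of_lt_of_le hym2 h4)
  have B : 0 ≤ F (xm, ym) + F (x₂, y₁) - F (xm, y₁) - F (x₂, ym) :=
    delta_nonneg_bd F X₁ X₂ Y₁ Y₂ hFcont hD2 hX₁ hX₂ hY₁ hY₂
      (h1.trans hxm1) hxm2.le h2 h3 hym1.le (hym2.le.trans h4)
  have Cc : 0 ≤ F (x₁, y₂) + F (xm, ym) - F (x₁, ym) - F (xm, y₂) :=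
    delta_nonneg_bd F X₁ X₂ Y₁ Y₂ hFcont hD2 hX₁ hX₂ hY₁ hY₂
      h1 hxm1.le (hxm2.le.trans h2) (h3.trans hym1) hym2.le h4
  have D : 0 ≤ F (xm, y₂) + F (x₂, ym) - F (xm, ym) - F (x₂, y₂) :=
    delta_nonneg_bd F X₁ X₂ Y₁ Y₂ hFcont hD2 hX₁ hX₂ hY₁ hY₂
      (h1.trans hxm1) hxm2.le h2 (h3.trans hym1) hym2.le h4
  linarith
end Delta2

lemma box_pos (μ : Measure (ℝ × ℝ)) (a b c d : ℝ)
    (h : 0 < μ (Ioc a b ×ˢ Ioc c d)) :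
    ∃ a' c' : ℝ, a < a' ∧ a' ≤ b ∧ c < c' ∧ c' ≤ d ∧
      0 < μ (Icc a' b ×ˢ Icc c' d) := by
  have hab : a < b := by
    by_contra hcon
    rw [Ioc_eq_empty hcon, empty_prod] at h
    simp at h
  have hcd : c < d := by
    by_contra hcon
    rw [Ioc_eq_empty hcon, prod_empty] at h
    simp at h
  set s : ℕ → Set (ℝ × ℝ) := fun n =>
    Icc (a + (b - a) / (n + 1)) b ×ˢ Icc (c + (d - c) / (n + 1)) d with hs
  have hmono : Monotone s := by
    intro n m hnm
    have h1 : a + (b - a) / (m + 1) ≤ a + (b - a) / (n + 1) := by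
      have : (b - a) / (m + 1) ≤ (b - a) / (n + 1) := by
        apply div_le_div_of_nonneg_left (by linarith) (by positivity)
        exact_mod_cast by omega
      linarith
    have h2 : c + (d - c) / (m + 1) ≤ c + (d - c) / (n + 1) := by
      have : (d - c) / (m + 1) ≤ (d - c) / (n + 1) := by
        apply div_le_div_of_nonneg_left (by linarith) (by positivity)
        exact_mod_cast by omega
      linarith
    exact prod_mono (Icc_subset_Icc h1 le_rfl) (Icc_subset_Icc h2 le_rfl)
  have hunion : (⋃ n, s n) = Ioc a b ×ˢ Ioc c d := by
    ext p
    simp only [mem_iUnion, hs, mem_prod, mem_Icc, mem_Ioc]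
    constructor
    · rintro ⟨n, ⟨h1, h2⟩, h3, h4⟩
      have e1 : (0:ℝ) < (b - a) / (n + 1) := div_pos (by linarith) (by positivity)
      have e2 : (0:ℝ) < (d - c) / (n + 1) := div_pos (by linarith) (by positivity)
      exact ⟨⟨by linarith, h2⟩, by linarith, h4⟩
    · rintro ⟨⟨h1, h2⟩, h3, h4⟩
      obtain ⟨n, hn⟩ := exists_nat_gt (max ((b - a) / (p.1 - a)) ((d - c) / (p.2 - c)))
      refine ⟨n, ⟨?_, h2⟩, ?_, h4⟩
      · have hgt : (b - a) / (p.1 - a) < (n : ℝ) + 1 :=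
          lt_of_le_of_lt (le_max_left _ _) (by linarith [hn])
        rw [div_lt_iff₀ (by linarith)] at hgt
        rw [← le_sub_iff_add_le']
        rw [div_le_iff₀ (by positivity)]
        nlinarith
      · have hgt : (d - c) / (p.2 - c) < (n : ℝ) + 1 :=
          lt_of_le_of_lt (le_max_right _ _) (by linarith [hn])
        rw [div_lt_iff₀ (by linarith)] at hgt
        rw [← le_sub_iff_add_le']
        rw [div_le_iff₀ (by positivity)]
        nlinarith
  rw [← hunion, hmono.directed_le.measure_iUnion, lt_iSup_iff] at h
  obtain ⟨n, hn⟩ := h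
  refine ⟨a + (b - a) / (n + 1), c + (d - c) / (n + 1), ?_, ?_, ?_, ?_, hn⟩
  · have : (0:ℝ) < (b - a) / (n + 1) := div_pos (by linarith) (by positivity)
    linarith
  · have h1 : (b - a) / (n + 1) ≤ b - a := by
      apply div_le_self (by linarith)
      exact_mod_cast by omega
    linarith
  · have : (0:ℝ) < (d - c) / (n + 1) := div_pos (by linarith) (by positivity)
    linarith
  · have h1 : (d - c) / (n + 1) ≤ d - c := by
      apply div_le_self (by linarith)
      exact_mod_cast by omega
    linarith


lemma deltaFun_contOn (F : ℝ × ℝ → ℝ)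
    (hFcont : ContinuousOn F (Icc (0:ℝ) 1 ×ˢ Icc (0:ℝ) 1)) :
    ContinuousOn (fun z : (ℝ × ℝ) × (ℝ × ℝ) =>
        F (z.1.1, z.2.2) + F (z.2.1, z.1.2) - F z.1 - F z.2)
      ((Icc (0:ℝ) 1 ×ˢ Icc (0:ℝ) 1) ×ˢ (Icc (0:ℝ) 1 ×ˢ Icc (0:ℝ) 1)) := by
  set S : Set (ℝ × ℝ) := Icc (0:ℝ) 1 ×ˢ Icc (0:ℝ) 1 with hS
  have hmaps₁ : MapsTo (fun z : (ℝ × ℝ) × (ℝ × ℝ) => (z.1.1, z.2.2)) (S ×ˢ S) S :=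
    fun z hz => ⟨hz.1.1, hz.2.2⟩
  have hmaps₂ : MapsTo (fun z : (ℝ × ℝ) × (ℝ × ℝ) => (z.2.1, z.1.2)) (S ×ˢ S) S :=
    fun z hz => ⟨hz.2.1, hz.1.2⟩
  have hmaps₃ : MapsTo (fun z : (ℝ × ℝ) × (ℝ × ℝ) => z.1) (S ×ˢ S) S := fun z hz => hz.1
  have hmaps₄ : MapsTo (fun z : (ℝ × ℝ) × (ℝ × ℝ) => z.2) (S ×ˢ S) S := fun z hz => hz.2
  have hcont₁ : ContinuousOn (fun z : (ℝ × ℝ) × (ℝ × ℝ) => F (z.1.1, z.2.2)) (S ×ˢ S) := by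
    have := hFcont.comp (Continuous.continuousOn (by fun_prop) :
      ContinuousOn (fun z : (ℝ × ℝ) × (ℝ × ℝ) => (z.1.1, z.2.2)) (S ×ˢ S)) hmaps₁
    exact this
  have hcont₂ : ContinuousOn (fun z : (ℝ × ℝ) × (ℝ × ℝ) => F (z.2.1, z.1.2)) (S ×ˢ S) := by
    have := hFcont.comp (Continuous.continuousOn (by fun_prop) :
      ContinuousOn (fun z : (ℝ × ℝ) × (ℝ × ℝ) => (z.2.1, z.1.2)) (S ×ˢ S)) hmaps₂
    exact this
  have hcont₃ : ContinuousOn (fun z : (ℝ × ℝ) × (ℝ × ℝ) => F z.1) (S ×ˢ S) := by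
    have := hFcont.comp (Continuous.continuousOn (by fun_prop) :
      ContinuousOn (fun z : (ℝ × ℝ) × (ℝ × ℝ) => z.1) (S ×ˢ S)) hmaps₃
    exact this
  have hcont₄ : ContinuousOn (fun z : (ℝ × ℝ) × (ℝ × ℝ) => F z.2) (S ×ˢ S) := by
    have := hFcont.comp (Continuous.continuousOn (by fun_prop) :
      ContinuousOn (fun z : (ℝ × ℝ) × (ℝ × ℝ) => z.2) (S ×ˢ S)) hmaps₄
    exact this
  exact ((hcont₁.add hcont₂).sub hcont₃).sub hcont₄


theorem stmt1 (F : ℝ × ℝ → ℝ)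
    (hFcont : ContinuousOn F (Icc (0:ℝ) 1 ×ˢ Icc (0:ℝ) 1))
    (μstar : Measure (ℝ × ℝ)) (hds : IsDoublyStochastic μstar)
    (hmax : ∀ μ : Measure (ℝ × ℝ), IsDoublyStochastic μ →
      ∫ p, F p ∂μ ≤ ∫ p, F p ∂μstar)
    (C : ℝ → ℝ → ℝ) (hC : ∀ x y, C x y = copulaOf μstar x y)
    (X₁ X₂ Y₁ Y₂ : ℝ)
    (hX₁ : 0 ≤ X₁) (hX : X₁ ≤ X₂) (hX₂ : X₂ ≤ 1)
    (hY₁ : 0 ≤ Y₁) (hY : Y₁ ≤ Y₂) (hY₂ : Y₂ ≤ 1)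
    (hrect : C X₂ Y₂ + C X₁ Y₁ - C X₁ Y₂ - C X₂ Y₁ > 0)
    (hD2 : ∀ x y, x ∈ Ioo X₁ X₂ → y ∈ Ioo Y₁ Y₂ →
      DifferentiableAt ℝ (fun x' => F (x', y)) x ∧
      DifferentiableAt ℝ (fun y' => deriv (fun x' => F (x', y')) x) y ∧
      deriv (fun y' => deriv (fun x' => F (x', y')) x) y < 0) :
    ∀ x ∈ Icc X₁ X₂, ∀ y ∈ Icc Y₁ Y₂,
      C x y = max (C x Y₂ + C X₂ y - C X₂ Y₂) (C x Y₁ + C X₁ y - C X₁ Y₁) := by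
  intro x hx y hy
  haveI : IsProbabilityMeasure μstar := hds.1
  have hC' : ∀ u v : ℝ, C u v = (μstar (Icc 0 u ×ˢ Icc 0 v)).toReal := by
    intro u v; rw [hC u v]; rfl
  -- splitting along the second coordinate
  have hv : ∀ (E : Set ℝ), MeasurableSet E → ∀ v₁ v₂ : ℝ, 0 ≤ v₁ → v₁ ≤ v₂ →
      μstar (E ×ˢ Icc 0 v₂) = μstar (E ×ˢ Icc 0 v₁) + μstar (E ×ˢ Ioc v₁ v₂) := by
    intro E hE v₁ v₂ h1 h2
    rw [← Icc_union_Ioc_eq_Icc h1 h2, prod_union]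
    refine measure_union ?_ (hE.prod measurableSet_Ioc)
    rw [disjoint_left]
    rintro p hp hq
    simp only [mem_prod, mem_Icc, mem_Ioc] at hp hq
    linarith [hp.2.2, hq.2.1]
  -- splitting along the first coordinate
  have hh : ∀ (V : Set ℝ), MeasurableSet V → ∀ u₁ u₂ : ℝ, 0 ≤ u₁ → u₁ ≤ u₂ →
      μstar (Icc 0 u₂ ×ˢ V) = μstar (Icc 0 u₁ ×ˢ V) + μstar (Ioc u₁ u₂ ×ˢ V) := by
    intro V hV u₁ u₂ h1 h2
    rw [← Icc_union_Ioc_eq_Icc h1 h2, union_prod]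
    refine measure_union ?_ (measurableSet_Ioc.prod hV)
    rw [disjoint_left]
    rintro p hp hq
    simp only [mem_prod, mem_Icc, mem_Ioc] at hp hq
    linarith [hp.1.2, hq.1.1]
  have hsplit : ∀ u₁ u₂ v₁ v₂ : ℝ, 0 ≤ u₁ → u₁ ≤ u₂ → 0 ≤ v₁ → v₁ ≤ v₂ →
      (μstar (Ioc u₁ u₂ ×ˢ Ioc v₁ v₂)).toReal =
        C u₂ v₂ - C u₁ v₂ - C u₂ v₁ + C u₁ v₁ := by
    intro u₁ u₂ v₁ v₂ h1 h2 h3 h4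
    have e1 := hh (Icc 0 v₂) measurableSet_Icc u₁ u₂ h1 h2
    have e2 := hv (Ioc u₁ u₂) measurableSet_Ioc v₁ v₂ h3 h4
    have e3 := hh (Icc 0 v₁) measurableSet_Icc u₁ u₂ h1 h2
    have r1 : (μstar (Icc 0 u₂ ×ˢ Icc 0 v₂)).toReal =
        (μstar (Icc 0 u₁ ×ˢ Icc 0 v₂)).toReal + (μstar (Ioc u₁ u₂ ×ˢ Icc 0 v₂)).toReal := by
      rw [e1, ENNReal.toReal_add (measure_ne_top _ _) (measure_ne_top _ _)]
    have r2 : (μstar (Ioc u₁ u₂ ×ˢ Icc 0 v₂)).toReal =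
        (μstar (Ioc u₁ u₂ ×ˢ Icc 0 v₁)).toReal + (μstar (Ioc u₁ u₂ ×ˢ Ioc v₁ v₂)).toReal := by
      rw [e2, ENNReal.toReal_add (measure_ne_top _ _) (measure_ne_top _ _)]
    have r3 : (μstar (Icc 0 u₂ ×ˢ Icc 0 v₁)).toReal =
        (μstar (Icc 0 u₁ ×ˢ Icc 0 v₁)).toReal + (μstar (Ioc u₁ u₂ ×ˢ Icc 0 v₁)).toReal := by
      rw [e3, ENNReal.toReal_add (measure_ne_top _ _) (measure_ne_top _ _)]
    rw [hC' u₂ v₂, hC' u₁ v₂, hC' u₂ v₁, hC' u₁ v₁]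
    linarith
  set s₁ := μstar (Ioc X₁ x ×ˢ Ioc Y₁ y) with hs₁def
  set s₂ := μstar (Ioc x X₂ ×ˢ Ioc y Y₂) with hs₂def
  have hd1 : s₁.toReal = C x y - C X₁ y - C x Y₁ + C X₁ Y₁ :=
    hsplit X₁ x Y₁ y hX₁ hx.1 hY₁ hy.1
  have hd2 : s₂.toReal = C X₂ Y₂ - C x Y₂ - C X₂ y + C x y :=
    hsplit x X₂ y Y₂ (hX₁.trans hx.1) hx.2 (hY₁.trans hy.1) hy.2
  have hn1 : 0 ≤ s₁.toReal := ENNReal.toReal_nonneg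
  have hn2 : 0 ≤ s₂.toReal := ENNReal.toReal_nonneg
  have key : s₁ = 0 ∨ s₂ = 0 := by
    by_contra hcon
    push_neg at hcon
    have hpos1 : 0 < s₁ := pos_iff_ne_zero.mpr hcon.1
    have hpos2 : 0 < s₂ := pos_iff_ne_zero.mpr hcon.2
    obtain ⟨a₁, b₁, ha₁, ha₁x, hb₁, hb₁y, hK₁⟩ := box_pos μstar X₁ x Y₁ y hpos1
    obtain ⟨a₂, b₂, ha₂, ha₂X, hb₂, hb₂Y, hK₂⟩ := box_pos μstar x X₂ y Y₂ hpos2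
    set K₁ : Set (ℝ × ℝ) := Icc a₁ x ×ˢ Icc b₁ y with hK₁def
    set K₂ : Set (ℝ × ℝ) := Icc a₂ X₂ ×ˢ Icc b₂ Y₂ with hK₂def
    have hK₁m : MeasurableSet K₁ := measurableSet_Icc.prod measurableSet_Icc
    have hK₂m : MeasurableSet K₂ := measurableSet_Icc.prod measurableSet_Icc
    have hK₁S : K₁ ⊆ Icc (0:ℝ) 1 ×ˢ Icc (0:ℝ) 1 := by
      rintro p hp
      simp only [hK₁def, mem_prod, mem_Icc] at hp ⊢
      refine ⟨⟨?_, ?_⟩, ?_, ?_⟩ <;>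
        linarith [hp.1.1, hp.1.2, hp.2.1, hp.2.2, hx.1, hx.2, hy.1, hy.2]
    have hK₂S : K₂ ⊆ Icc (0:ℝ) 1 ×ˢ Icc (0:ℝ) 1 := by
      rintro p hp
      simp only [hK₂def, mem_prod, mem_Icc] at hp ⊢
      refine ⟨⟨?_, ?_⟩, ?_, ?_⟩ <;>
        linarith [hp.1.1, hp.1.2, hp.2.1, hp.2.2, hx.1, hx.2, hy.1, hy.2]
    have hdisj : Disjoint K₁ K₂ := by
      rw [disjoint_left]
      rintro p hp hq
      simp only [hK₁def, hK₂def, mem_prod, mem_Icc] at hp hq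
      linarith [hp.1.2, hq.1.1]
    have hK₁₂sub : K₁ ×ˢ K₂ ⊆
        (Icc (0:ℝ) 1 ×ˢ Icc (0:ℝ) 1) ×ˢ (Icc (0:ℝ) 1 ×ˢ Icc (0:ℝ) 1) :=
      prod_mono hK₁S hK₂S
    have hcomp : IsCompact (K₁ ×ˢ K₂) :=
      ((isCompact_Icc.prod isCompact_Icc).prod (isCompact_Icc.prod isCompact_Icc))
    have hne : (K₁ ×ˢ K₂).Nonempty :=
      ⟨((a₁, b₁), (a₂, b₂)), ⟨⟨⟨le_rfl, ha₁x⟩, ⟨le_rfl, hb₁y⟩⟩,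
        ⟨⟨le_rfl, ha₂X⟩, ⟨le_rfl, hb₂Y⟩⟩⟩⟩
    obtain ⟨z₀, hz₀, hmin⟩ := hcomp.exists_isMinOn hne
      ((deltaFun_contOn F hFcont).mono hK₁₂sub)
    have hz₀' := hz₀
    simp only [hK₁def, hK₂def, mem_prod, mem_Icc] at hz₀'
    have hcpos : 0 < F (z₀.1.1, z₀.2.2) + F (z₀.2.1, z₀.1.2) - F z₀.1 - F z₀.2 := by
      have h := delta_pos_bd F X₁ X₂ Y₁ Y₂ hFcont hD2 hX₁ hX₂ hY₁ hY₂
        (x₁ := z₀.1.1) (x₂ := z₀.2.1) (y₁ := z₀.1.2) (y₂ := z₀.2.2)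
        (by linarith [hz₀'.1.1.1]) (by linarith [hz₀'.1.1.2, hz₀'.2.1.1])
        (by linarith [hz₀'.2.1.2]) (by linarith [hz₀'.1.2.1])
        (by linarith [hz₀'.1.2.2, hz₀'.2.2.1]) (by linarith [hz₀'.2.2.2])
      simpa using h
    have hGmin : ∀ p ∈ K₁, ∀ q ∈ K₂,
        F (z₀.1.1, z₀.2.2) + F (z₀.2.1, z₀.1.2) - F z₀.1 - F z₀.2 ≤
          F (p.1, q.2) + F (q.1, p.2) - F p - F q := by
      intro p hp q hq
      have := hmin (show (p, q) ∈ K₁ ×ˢ K₂ from ⟨hp, hq⟩)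
      simpa using this
    obtain ⟨μ'', hds'', hlt⟩ := swap_lemma F hFcont μstar hds hK₁m hK₂m hK₁S hK₂S
      hdisj hK₁ hK₂ hcpos hGmin
    exact absurd (hmax μ'' hds'') (not_le.mpr hlt)
  rcases key with h0 | h0
  · have hz : s₁.toReal = 0 := by rw [h0]; simp
    rw [max_eq_right (by linarith)]
    linarith
  · have hz : s₂.toReal = 0 := by rw [h0]; simp
    rw [max_eq_left (by linarith)]
    linarith
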